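/- Let M be a finite-dimensional C*-algebra with universal quantum family (A, Φ) and comultiplication Δ on A determined by (Φ ⊗ id)∘Φ = (id ⊗ Δ)∘Φ. For characters λ, μ of A, define Θ(λ) = (id ⊗ λ)∘Φ : M → M. Then Θ(λ * μ) = Θ(λ) ∘ Θ(μ), where λ * μ = (λ ⊗ μ)∘Δ; i.e., Θ is a semigroup homomorphism from the characters of A under convolution to unital *-endomorphisms of M under composition. -/

import Mathlib

open scoped TensorProduct

private lemma map_id_comp_aux {R S B C D : Type*} [CommSemiring R] [Semiring S] [Algebra R S]
    [Semiring B] [Algebra R B] [Semiring C] [Algebra R C] [Semiring D] [Algebra R D]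
    (f : C →ₐ[R] D) (g : B →ₐ[R] C) :
    Algebra.TensorProduct.map (AlgHom.id R S) (f.comp g)
      = (Algebra.TensorProduct.map (AlgHom.id R S) f).comp
          (Algebra.TensorProduct.map (AlgHom.id R S) g) := by
  rw [← Algebra.TensorProduct.map_comp, AlgHom.id_comp]

set_option maxRecDepth 8000 in
set_option maxHeartbeats 1600000 in
/-- `Θ` is a semigroup homomorphism from characters of `A` under convolution to unital
endomorphisms of `M` under composition: `Θ(λ * μ) = Θ(λ) ∘ Θ(μ)`, where
`Θ(λ) = (id ⊗ λ) ∘ Φ` and `λ * μ = (λ ⊗ μ) ∘ Δ`. -/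
theorem character_convolution_to_composition
    {M A : Type*}
    [NormedRing M] [StarRing M] [CStarRing M] [NormedAlgebra ℂ M] [StarModule ℂ M] [CompleteSpace M]
    [FiniteDimensional ℂ M]
    [NormedRing A] [StarRing A] [CStarRing A] [NormedAlgebra ℂ A] [StarModule ℂ A] [CompleteSpace A]
    (Φ : M →ₐ[ℂ] M ⊗[ℂ] A) (Δ : A →ₐ[ℂ] A ⊗[ℂ] A)
    (hΔ : (Algebra.TensorProduct.assoc ℂ ℂ ℂ M A A).toAlgHom.comp
            ((Algebra.TensorProduct.map Φ (AlgHom.id ℂ A)).comp Φ)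
        = (Algebra.TensorProduct.map (AlgHom.id ℂ M) Δ).comp Φ)
    (lam mu : A →⋆ₐ[ℂ] ℂ) :
    -- `Θ(λ * μ) = Θ(λ) ∘ Θ(μ)`
    (Algebra.TensorProduct.rid ℂ ℂ M).toAlgHom.comp
        ((Algebra.TensorProduct.map (AlgHom.id ℂ M)
            ((Algebra.TensorProduct.lid ℂ ℂ).toAlgHom.comp
              ((Algebra.TensorProduct.map lam.toAlgHom mu.toAlgHom).comp Δ))).comp Φ)
      = ((Algebra.TensorProduct.rid ℂ ℂ M).toAlgHom.comp
            ((Algebra.TensorProduct.map (AlgHom.id ℂ M) lam.toAlgHom).comp Φ)).comp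
          ((Algebra.TensorProduct.rid ℂ ℂ M).toAlgHom.comp
            ((Algebra.TensorProduct.map (AlgHom.id ℂ M) mu.toAlgHom).comp Φ)) := by
  apply AlgHom.ext; intro x
  have h := AlgHom.congr_fun hΔ x
  simp only [AlgHom.comp_apply, AlgEquiv.toAlgHom_eq_coe, AlgHom.coe_coe] at h ⊢
  rw [← AlgHom.comp_assoc, map_id_comp_aux]
  simp only [AlgHom.comp_apply]
  rw [← h]
  generalize Φ x = t
  induction t using TensorProduct.induction_on with
  | zero => simp
  | add a b ha hb => simp only [map_add, ha, hb]
  | tmul m a =>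
    simp only [Algebra.TensorProduct.map_tmul, AlgHom.coe_id, id_eq,
      Algebra.TensorProduct.rid_tmul, AlgEquiv.toAlgHom_apply]
    rw [map_smul Φ, map_smul]
    generalize Φ m = s
    induction s using TensorProduct.induction_on with
    | zero => simp
    | add a b ha hb =>
      simp only [TensorProduct.add_tmul, map_add, smul_add] at ha hb ⊢
      rw [ha, hb]
    | tmul m' a' =>
      simp only [Algebra.TensorProduct.assoc_tmul, Algebra.TensorProduct.map_tmul,
        AlgHom.coe_id, id_eq, AlgHom.comp_apply, AlgHom.coe_coe,
        Algebra.TensorProduct.lid_tmul, Algebra.TensorProduct.rid_tmul, AlgEquiv.toAlgHom_apply,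
        TensorProduct.smul_tmul', smul_smul, smul_eq_mul]
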